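/- Let K be a field, let d ≥ 2 with (d : K) invertible in K, and let F ∈ K[X,Y] be homogeneous of degree d. Define sequences of polynomials A_n, B_n ∈ K[x] by A₀ = x, B₀ = 1, A_{n+1}(x) = F_Y(A_n(x), B_n(x)), B_{n+1}(x) = −F_X(A_n(x), B_n(x)), so that (A_n, B_n) represents the n-th iterate of φ_F on the affine chart, and set Ψ_n(x) = (A_n(x) − x·B_n(x))/d (a polynomial whose roots contain the affine n-periodic points, and one has A_n/B_n = x + d·Ψ_n/B_n). Then for every n ≥ 0, the polynomial B_n(x) divides d·F(A_n(x), B_n(x)) − (A_n(x) − x·B_n(x))·F_X(A_n(x), B_n(x)); equivalently, Ψ_{n+1}·B_{n+1} = −(F(A_n, B_n) − Ψ_n·F_X(A_n, B_n)) with B_n dividing F(A_n, B_n) − Ψ_n·F_X(A_n, B_n). -/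

import Mathlib

open MvPolynomial Finsupp

lemma X_mul_pderiv_monomial {K : Type*} [CommSemiring K] {i : Fin 2}
    {s : Fin 2 →₀ ℕ} {a : K} :
    MvPolynomial.X i * pderiv i (monomial s a) = (s i) • monomial s a := by
  rw [pderiv_monomial]
  rcases Nat.eq_zero_or_pos (s i) with h | h
  · simp [h]
  · have hle : Finsupp.single i 1 ≤ s := by
      rwa [Finsupp.single_le_iff]
    rw [smul_monomial, ← pow_one (MvPolynomial.X i : MvPolynomial (Fin 2) K),
      ← monomial_single_add, add_comm, tsub_add_cancel_of_le hle]
    simp [mul_comm, nsmul_eq_mul]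

lemma euler {K : Type*} [CommRing K] {d : ℕ} {F : MvPolynomial (Fin 2) K}
    (hF : F.IsHomogeneous d) :
    MvPolynomial.X 0 * pderiv 0 F + MvPolynomial.X 1 * pderiv 1 F = d • F := by
  conv_lhs => rw [F.as_sum]
  conv_rhs => rw [F.as_sum]
  rw [map_sum, map_sum, Finset.smul_sum, Finset.mul_sum, Finset.mul_sum,
    ← Finset.sum_add_distrib]
  refine Finset.sum_congr rfl fun s hs => ?_
  rw [_root_.X_mul_pderiv_monomial, _root_.X_mul_pderiv_monomial, ← add_smul]
  congr 1
  have := hF (MvPolynomial.mem_support_iff.mp hs)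
  rw [← this]
  simp only [← this, Finsupp.weight_apply, Finsupp.sum_fintype, Fin.sum_univ_two, Pi.one_apply, smul_eq_mul, mul_one, fun i => (zero_smul ℕ i)]
  rw [Finsupp.sum_fintype _ _ fun i => rfl, Fin.sum_univ_two]



/-- **Divisibility underlying the recursion for the periodic-point polynomials `Ψ_n`.**
Let `F ∈ K[X,Y]` be homogeneous of degree `d ≥ 2` with `(d : K) ≠ 0`, and define
`A₀ = x`, `B₀ = 1`, `A_{n+1} = F_Y(A_n, B_n)`, `B_{n+1} = −F_X(A_n, B_n)`, so that
`(A_n, B_n)` represents the `n`-th iterate of `φ_F` on the affine chart and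
`Ψ_n = (A_n − x·B_n)/d`.  Then for every `n`, the polynomial `B_n` divides
`d·F(A_n, B_n) − (A_n − x·B_n)·F_X(A_n, B_n)`. -/
theorem Bn_dvd_periodic_point_recursion
    {K : Type*} [Field K] (d : ℕ) (hd : 2 ≤ d) (hdK : (d : K) ≠ 0)
    (F : MvPolynomial (Fin 2) K) (hF : F.IsHomogeneous d)
    (A B : ℕ → Polynomial K)
    (hA0 : A 0 = Polynomial.X) (hB0 : B 0 = 1)
    (hA : ∀ n, A (n + 1) = MvPolynomial.aeval ![A n, B n] (MvPolynomial.pderiv 1 F))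
    (hB : ∀ n, B (n + 1) = -MvPolynomial.aeval ![A n, B n] (MvPolynomial.pderiv 0 F)) :
    ∀ n : ℕ,
      B n ∣ Polynomial.C (d : K) * MvPolynomial.aeval ![A n, B n] F
            - (A n - Polynomial.X * B n) * MvPolynomial.aeval ![A n, B n] (MvPolynomial.pderiv 0 F) := by
  intro n
  have h := congrArg (MvPolynomial.aeval ![A n, B n]) (euler hF)
  simp only [map_add, map_mul, map_nsmul, MvPolynomial.aeval_X, Matrix.cons_val_zero,
    Matrix.cons_val_one, Matrix.head_cons, nsmul_eq_mul, map_natCast] at h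
  refine ⟨MvPolynomial.aeval ![A n, B n] (MvPolynomial.pderiv 1 F)
    + Polynomial.X * MvPolynomial.aeval ![A n, B n] (MvPolynomial.pderiv 0 F), ?_⟩
  have hC : (d : Polynomial K) = Polynomial.C (d : K) := by simp
  rw [hC] at h
  linear_combination -h
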